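/- Primal construction for European superhedging: in the Kabanov model on a finite tree, define 𝒵_T^ω = ξ^ω + 𝒦_T^ω for each terminal node ω, and, backwards in time, 𝒲_t^ω = ⋂_{ω' ∈ succ(ω)} 𝒵_{t+1}^{ω'} and 𝒵_t^ω = 𝒲_t^ω + 𝒦_t^ω. Then for every time t and node ω, 𝒵_t^ω equals the set of portfolios z ∈ ℝ^d such that there exists a self-financing strategy (y_s)_{s=t}^T on the subtree rooted at ω with y_t = z and y_T − ξ ∈ 𝒦_T. In particular, 𝒵_0 is the set of superhedging portfolios for ξ. -/
import Mathlib


open Pointwise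

/-- primal construction. On a finite event tree (nodes encoded as
the atoms `part t ω` of the filtration), with `𝒵_T = ξ + 𝒦_T`,
`𝒲_t = ⋂_{ω' ∈ succ} 𝒵_{t+1}` and `𝒵_t = 𝒲_t + 𝒦_t`, the set `𝒵_t` at each node
equals the set of portfolios from which the option `ξ` can be superhedged by a
self-financing strategy on the subtree rooted at that node. In particular
(taking `t = 0`), `𝒵_0` is the set of superhedging portfolios for `ξ`. -/
theorem stmt8 (d T : ℕ) (Ω : Type) [Fintype Ω] [DecidableEq Ω]
    (part : ℕ → Ω → Finset Ω)
    (hmem : ∀ t ω, ω ∈ part t ω)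
    (hcong : ∀ t ω ω', ω' ∈ part t ω → part t ω' = part t ω)
    (hrefine : ∀ t ω, part (t + 1) ω ⊆ part t ω)
    (hpart0 : ∀ ω, part 0 ω = Finset.univ)
    (hpartT : ∀ ω, part T ω = {ω})
    (𝒦 : ℕ → Ω → Set (Fin d → ℝ))
    (h𝒦adapt : ∀ t ω ω', ω' ∈ part t ω → 𝒦 t ω' = 𝒦 t ω)
    (h𝒦cone : ∀ t ω, Convex ℝ (𝒦 t ω) ∧ ∀ (r : ℝ), 0 ≤ r → ∀ k ∈ 𝒦 t ω, r • k ∈ 𝒦 t ω)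
    (ξ : Ω → Fin d → ℝ)
    (𝒵 𝒲 : ℕ → Ω → Set (Fin d → ℝ))
    (hZT : ∀ ω, 𝒵 T ω = {ξ ω} + 𝒦 T ω)
    (hW : ∀ t, t < T → ∀ ω, 𝒲 t ω = ⋂ ω' ∈ part t ω, 𝒵 (t + 1) ω')
    (hZ : ∀ t, t < T → ∀ ω, 𝒵 t ω = 𝒲 t ω + 𝒦 t ω) :
    ∀ t, t ≤ T → ∀ ω, 𝒵 t ω = {z : Fin d → ℝ | ∃ y : ℕ → Ω → Fin d → ℝ,
      (∀ ω' ∈ part t ω, y t ω' = z) ∧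
      (∀ s, t ≤ s → s < T → ∀ ω' ∈ part t ω, ∀ ω'' ∈ part s ω', y (s + 1) ω'' = y (s + 1) ω') ∧
      (∀ s, t ≤ s → s < T → ∀ ω' ∈ part t ω, y s ω' - y (s + 1) ω' ∈ 𝒦 s ω') ∧
      (∀ ω' ∈ part t ω, y T ω' - ξ ω' ∈ 𝒦 T ω')} := by
  classical
  have hmono : ∀ s t : ℕ, t ≤ s → ∀ ω, part s ω ⊆ part t ω := by
    intro s
    induction s with
    | zero =>
      intro t ht ω
      have : t = 0 := Nat.le_zero.mp ht
      subst this; exact fun x hx => hx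
    | succ s ih =>
      intro t ht ω
      rcases Nat.lt_or_ge t (s + 1) with h | h
      · exact (hrefine s ω).trans (ih t (Nat.lt_succ_iff.mp h) ω)
      · have : t = s + 1 := le_antisymm ht h
        subst this; exact fun x hx => hx
  suffices h : ∀ n t, t + n = T → ∀ ω, 𝒵 t ω = {z : Fin d → ℝ | ∃ y : ℕ → Ω → Fin d → ℝ,
      (∀ ω' ∈ part t ω, y t ω' = z) ∧
      (∀ s, t ≤ s → s < T → ∀ ω' ∈ part t ω, ∀ ω'' ∈ part s ω', y (s + 1) ω'' = y (s + 1) ω') ∧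
      (∀ s, t ≤ s → s < T → ∀ ω' ∈ part t ω, y s ω' - y (s + 1) ω' ∈ 𝒦 s ω') ∧
      (∀ ω' ∈ part t ω, y T ω' - ξ ω' ∈ 𝒦 T ω')} by
    intro t ht ω
    exact h (T - t) t (by omega) ω
  intro n
  induction n with
  | zero =>
    intro t ht ω
    have hT : t = T := by omega
    subst hT
    rw [hZT ω]
    ext z
    constructor
    · rintro ⟨x, hx, k, hk, hz⟩
      rw [Set.mem_singleton_iff] at hx
      subst hx
      refine ⟨fun _ _ => z, fun _ _ => rfl, ?_, ?_, ?_⟩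
      · intro s hs hs' _ _ _ _; omega
      · intro s hs hs' _ _; omega
      · intro ω' hω'
        rw [hpartT ω, Finset.mem_singleton] at hω'
        subst hω'
        have : z - ξ ω' = k := by rw [← hz]; ring
        rw [this]; exact hk
    · rintro ⟨y, h1, _, _, h4⟩
      have hm := hmem t ω
      have := h4 ω hm
      rw [h1 ω hm] at this
      exact ⟨ξ ω, rfl, z - ξ ω, this, by ring⟩
  | succ n ih =>
    intro t ht ω
    have htT : t < T := by omega
    rw [hZ t htT ω]
    ext z
    constructor
    · rintro ⟨w, hw, k, hk, hz⟩
      rw [hW t htT ω] at hw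
      -- representative function
      set g : Finset Ω → Ω := fun s => if h : s.Nonempty then h.choose else ω with hg
      have hgmem : ∀ s : Finset Ω, s.Nonempty → g s ∈ s := by
        intro s hs; simp only [hg, dif_pos hs]; exact hs.choose_spec
      have key : ∀ ρ : Ω, ∃ Y : ℕ → Ω → Fin d → ℝ, ρ ∈ part t ω →
          (∀ ρ' ∈ part (t + 1) ρ, Y (t + 1) ρ' = w) ∧
          (∀ s, t + 1 ≤ s → s < T → ∀ ρ' ∈ part (t + 1) ρ, ∀ ρ'' ∈ part s ρ',
            Y (s + 1) ρ'' = Y (s + 1) ρ') ∧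
          (∀ s, t + 1 ≤ s → s < T → ∀ ρ' ∈ part (t + 1) ρ, Y s ρ' - Y (s + 1) ρ' ∈ 𝒦 s ρ') ∧
          (∀ ρ' ∈ part (t + 1) ρ, Y T ρ' - ξ ρ' ∈ 𝒦 T ρ') := by
        intro ρ
        by_cases hρ : ρ ∈ part t ω
        · have hw' : w ∈ 𝒵 (t + 1) ρ := by
            exact Set.mem_iInter₂.mp hw ρ hρ
          rw [ih (t + 1) (by omega) ρ] at hw'
          obtain ⟨Y, hY1, hY2, hY3, hY4⟩ := hw'
          exact ⟨Y, fun _ => ⟨hY1, hY2, hY3, hY4⟩⟩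
        · exact ⟨fun _ _ => w, fun h => absurd h hρ⟩
      choose Y hY using key
      -- facts about representatives
      have hr : ∀ ρ ∈ part t ω, g (part (t + 1) ρ) ∈ part t ω ∧
          ρ ∈ part (t + 1) (g (part (t + 1) ρ)) := by
        intro ρ hρ
        have h1 : g (part (t + 1) ρ) ∈ part (t + 1) ρ :=
          hgmem _ ⟨ρ, hmem (t + 1) ρ⟩
        have h2 : part (t + 1) (g (part (t + 1) ρ)) = part (t + 1) ρ :=
          hcong (t + 1) ρ _ h1
        refine ⟨?_, by rw [h2]; exact hmem (t + 1) ρ⟩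
        have : g (part (t + 1) ρ) ∈ part t ρ := hrefine t ρ h1
        rwa [hcong t ω ρ hρ] at this
      refine ⟨fun s ρ => if s ≤ t then z else Y (g (part (t + 1) ρ)) s ρ, ?_, ?_, ?_, ?_⟩
      · intro ω' _; simp
      · intro s hs hsT ω' hω' ω'' hω''
        have hns : ¬ (s + 1 ≤ t) := by omega
        simp only [if_neg hns]
        rcases Nat.lt_or_ge t s with hts | hts
        · -- s ≥ t + 1 : same (t+1)-atom
          have hsub : ω'' ∈ part (t + 1) ω' := hmono s (t + 1) hts ω' hω''
          have heq : part (t + 1) ω'' = part (t + 1) ω' := hcong (t + 1) ω' ω'' hsub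
          rw [heq]
          obtain ⟨hrω, hρr⟩ := hr ω' hω'
          obtain ⟨_, hB, _, _⟩ := hY _ hrω
          refine hB s hts hsT ω' hρr ω'' hω''
        · -- s = t : value is w on the whole atom
          have hst : s = t := by omega
          subst hst
          have hω''t : ω'' ∈ part s ω := by
            have := hcong s ω ω' hω'
            rwa [this] at hω''
          have val : ∀ ρ ∈ part s ω, Y (g (part (s + 1) ρ)) (s + 1) ρ = w := by
            intro ρ hρ
            obtain ⟨hrρ, hρr⟩ := hr ρ hρ
            obtain ⟨hA, _, _, _⟩ := hY _ hrρ
            exact hA ρ hρr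
          rw [val ω'' hω''t, val ω' hω']
      · intro s hs hsT ω' hω'
        rcases Nat.lt_or_ge t s with hts | hts
        · have hns : ¬ (s ≤ t) := by omega
          have hns1 : ¬ (s + 1 ≤ t) := by omega
          simp only [if_neg hns, if_neg hns1]
          obtain ⟨hrω, hρr⟩ := hr ω' hω'
          obtain ⟨_, _, hC, _⟩ := hY _ hrω
          exact hC s hts hsT ω' hρr
        · have hst : s = t := by omega
          subst hst
          have hns1 : ¬ (s + 1 ≤ s) := by omega
          simp only [if_pos le_rfl, if_neg hns1]
          obtain ⟨hrω, hρr⟩ := hr ω' hω'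
          obtain ⟨hA, _, _, _⟩ := hY _ hrω
          rw [hA ω' hρr]
          have : z - w = k := by rw [← hz]; ring
          rw [this, h𝒦adapt s ω ω' hω']
          exact hk
      · intro ω' hω'
        have hns : ¬ (T ≤ t) := by omega
        simp only [if_neg hns]
        obtain ⟨hrω, hρr⟩ := hr ω' hω'
        obtain ⟨_, _, _, hD⟩ := hY _ hrω
        exact hD ω' hρr
    · rintro ⟨y, h1, h2, h3, h4⟩
      have hm := hmem t ω
      set w := y (t + 1) ω with hwdef
      have hk : z - w ∈ 𝒦 t ω := by
        have := h3 t le_rfl htT ω hm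
        rwa [h1 ω hm] at this
      have hw : w ∈ 𝒲 t ω := by
        rw [hW t htT ω]
        refine Set.mem_iInter₂.mpr fun ω' hω' => ?_
        rw [ih (t + 1) (by omega) ω']
        have hsub : part (t + 1) ω' ⊆ part t ω := by
          intro ρ hρ
          have : ρ ∈ part t ω' := hrefine t ω' hρ
          rwa [hcong t ω ω' hω'] at this
        refine ⟨y, ?_, ?_, ?_, ?_⟩
        · intro ρ hρ
          exact h2 t le_rfl htT ω hm ρ (hsub hρ)
        · intro s hs hsT ρ hρ ρ' hρ'
          exact h2 s (by omega) hsT ρ (hsub hρ) ρ' hρ'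
        · intro s hs hsT ρ hρ
          exact h3 s (by omega) hsT ρ (hsub hρ)
        · intro ρ hρ
          exact h4 ρ (hsub hρ)
      exact ⟨w, hw, z - w, hk, by ring⟩
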